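/- Let ε > 0, m ∈ (0,1], and suppose nonnegative reals μ_a^0, μ_a^1, …, μ_a^X and μ_b^0, …, μ_b^X in [0,1] satisfy μ_b^k = μ_a^{k+1} for 0 ≤ k < X and (mn+2k)μ_a^k − (mn−2k)μ_b^k − 2k ≥ εn for all 0 ≤ k ≤ X, where X = ⌈2m/ε⌉ and 2X ≤ mn. Then max_{1≤k≤X} μ_a^k ≥ εX/(m + 2X²/n), which exceeds 1 for n sufficiently large — a contradiction with μ_a^k ≤ 1. -/

import Mathlib

lemma sum_four_k_sub_two (X : ℕ) :
    ∑ k ∈ Finset.Icc 1 X, (4 * (k : ℝ) - 2) = 2 * (X : ℝ) ^ 2 := by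
  induction X with
  | zero => simp
  | succ j ih =>
      rw [Finset.sum_Icc_succ_top (by omega : 1 ≤ j + 1), ih]
      push_cast
      ring

/-- the telescoping/summation argument from the large-Δ impossibility.
If ε > 0, m ∈ (0,1], X = ⌈2m/ε⌉, 2X ≤ mn, and sequences μa, μb ∈ [0,1] satisfy
μb k = μa (k+1) for k < X and (mn+2k)·μa k − (mn−2k)·μb k − 2k ≥ εn for all k ≤ X,
then some μa k with 1 ≤ k ≤ X satisfies μa k ≥ εX/(m + 2X²/n); moreover this quantity
cannot exceed 1 (for n large it would, a contradiction with μa k ≤ 1). -/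
theorem summation_argument (ε m : ℝ) (hε : 0 < ε) (hm0 : 0 < m) (hm1 : m ≤ 1)
    (n : ℕ) (hn : 0 < n) (X : ℕ) (hX : X = ⌈2 * m / ε⌉₊)
    (hXn : 2 * (X : ℝ) ≤ m * n)
    (μa μb : ℕ → ℝ)
    (ha : ∀ k, 0 ≤ μa k ∧ μa k ≤ 1) (hb : ∀ k, 0 ≤ μb k ∧ μb k ≤ 1)
    (hab : ∀ k < X, μb k = μa (k + 1))
    (hineq : ∀ k ≤ X,
      (m * n + 2 * k) * μa k - (m * n - 2 * k) * μb k - 2 * k ≥ ε * n) :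
    (∃ k, 1 ≤ k ∧ k ≤ X ∧ ε * X / (m + 2 * (X : ℝ) ^ 2 / n) ≤ μa k) ∧
      (m + 2 * (X : ℝ) ^ 2 / n < ε * X → False) := by
  have hn' : (0 : ℝ) < n := by exact_mod_cast hn
  have hX1 : 1 ≤ X := by
    rw [hX]
    exact Nat.one_le_ceil_iff.mpr (by positivity)
  -- the argmax of μa over [1, X]
  obtain ⟨K, hKmem, hKmax⟩ := Finset.exists_max_image (Finset.Icc 1 X) μa
    ⟨1, Finset.mem_Icc.mpr ⟨le_refl 1, hX1⟩⟩
  obtain ⟨hK1, hKX⟩ := Finset.mem_Icc.mp hKmem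
  set M := μa K with hM
  have hM0 : 0 ≤ M := (ha K).1
  have hM1 : M ≤ 1 := (ha K).2
  set c : ℕ → ℝ := fun k => if k = 1 then m * n + 2 else 4 * k - 2 with hc
  -- key telescoping inequality
  have key : ∀ j, 1 ≤ j → j ≤ X →
      (m * n - 2 * j) * μb j + ∑ k ∈ Finset.Icc 1 j, (ε * n + 2 * k)
        ≤ ∑ k ∈ Finset.Icc 1 j, c k * μa k := by
    intro j h1
    induction j, h1 using Nat.le_induction with
    | base =>
        intro h2
        have := hineq 1 h2
        have hc1 : c 1 = m * n + 2 := by simp [hc]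
        rw [Finset.Icc_self, Finset.sum_singleton, Finset.sum_singleton, hc1]
        push_cast at this ⊢
        nlinarith
    | succ j hj ih =>
        intro h2
        have hjX : j ≤ X := by omega
        have ihj := ih hjX
        have hbj : μb j = μa (j + 1) := hab j (by omega)
        have hineqj := hineq (j + 1) h2
        rw [Finset.sum_Icc_succ_top (by omega : 1 ≤ j + 1),
            Finset.sum_Icc_succ_top (by omega : 1 ≤ j + 1)]
        have hcj : c (j + 1) = 4 * ((j : ℝ) + 1) - 2 := by
          simp only [hc]
          rw [if_neg (by omega)]
          push_cast
          ring
        rw [hcj]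
        rw [hbj] at ihj
        push_cast at hineqj ⊢
        nlinarith
  have keyX := key X hX1 le_rfl
  -- lower bound on the left side
  have hleft : ε * X * n ≤ (m * n - 2 * X) * μb X + ∑ k ∈ Finset.Icc 1 X, (ε * n + 2 * k) := by
    have h1 : 0 ≤ (m * n - 2 * X) * μb X :=
      mul_nonneg (by linarith) (hb X).1
    have h2 : ε * X * n ≤ ∑ k ∈ Finset.Icc 1 X, (ε * n + 2 * k) := by
      have : ∀ k ∈ Finset.Icc 1 X, ε * n ≤ ε * n + 2 * (k : ℝ) := by
        intro k hk
        have : (0 : ℝ) ≤ k := Nat.cast_nonneg k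
        linarith
      calc ε * X * n = ∑ _k ∈ Finset.Icc 1 X, ε * n := by
            rw [Finset.sum_const, Nat.card_Icc]
            simp
            ring
        _ ≤ _ := Finset.sum_le_sum this
    linarith
  -- upper bound on the right side
  have hright : ∑ k ∈ Finset.Icc 1 X, c k * μa k ≤ M * (m * n + 2 * (X : ℝ) ^ 2) := by
    have hc_nonneg : ∀ k ∈ Finset.Icc 1 X, 0 ≤ c k := by
      intro k hk
      obtain ⟨hk1, _⟩ := Finset.mem_Icc.mp hk
      simp only [hc]
      split
      · positivity
      · have : (1 : ℝ) ≤ k := by exact_mod_cast hk1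
        linarith
    have h1 : ∑ k ∈ Finset.Icc 1 X, c k * μa k ≤ ∑ k ∈ Finset.Icc 1 X, c k * M := by
      apply Finset.sum_le_sum
      intro k hk
      exact mul_le_mul_of_nonneg_left (hKmax k hk) (hc_nonneg k hk)
    have h2 : ∑ k ∈ Finset.Icc 1 X, c k = m * n + 2 * (X : ℝ) ^ 2 := by
      have : ∀ k ∈ Finset.Icc 1 X, c k = (4 * (k : ℝ) - 2) + (if k = 1 then m * n else 0) := by
        intro k hk
        simp only [hc]
        split <;> simp_all <;> ring
      rw [Finset.sum_congr rfl this, Finset.sum_add_distrib, sum_four_k_sub_two,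
          Finset.sum_ite_eq' (Finset.Icc 1 X) 1 (fun _ => m * n)]
      rw [if_pos (Finset.mem_Icc.mpr ⟨le_refl 1, hX1⟩)]
      ring
    calc ∑ k ∈ Finset.Icc 1 X, c k * μa k ≤ ∑ k ∈ Finset.Icc 1 X, c k * M := h1
      _ = (∑ k ∈ Finset.Icc 1 X, c k) * M := by rw [Finset.sum_mul]
      _ = M * (m * n + 2 * (X : ℝ) ^ 2) := by rw [h2]; ring
  have hmain : ε * X * n ≤ M * (m * n + 2 * (X : ℝ) ^ 2) := by
    calc ε * X * n ≤ _ := hleft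
      _ ≤ _ := keyX
      _ ≤ _ := hright
  have hd : (0 : ℝ) < m + 2 * (X : ℝ) ^ 2 / n := by positivity
  have hdiv : ε * X ≤ M * (m + 2 * (X : ℝ) ^ 2 / n) := by
    rw [← mul_le_mul_iff_of_pos_right hn']
    calc ε * X * n ≤ M * (m * n + 2 * (X : ℝ) ^ 2) := hmain
      _ = M * (m + 2 * (X : ℝ) ^ 2 / n) * n := by field_simp
  constructor
  · refine ⟨K, hK1, hKX, ?_⟩
    rw [div_le_iff₀ hd]
    exact hdiv
  · intro hlt
    have : M * (m + 2 * (X : ℝ) ^ 2 / n) ≤ m + 2 * (X : ℝ) ^ 2 / n := by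
      nlinarith
    linarith
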